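/- For p ∈ [1 - q/(d+1), 1) ∩ (0,1), integers d ≥ 1, q ≥ 2, and every x ≥ 1, the function f(x) = ((p·x + (q-1))/(p + (q-2) + x))^d satisfies 1 - f(x) ≤ x - 1 (one-sided contraction). -/

import Mathlib

theorem f_one_sided_contraction (p : ℝ) (d q : ℕ) (hp0 : 0 < p) (hp1 : p < 1)
    (hpc : 1 - (q : ℝ) / ((d : ℝ) + 1) ≤ p)
    (hd : 1 ≤ d) (hq : 2 ≤ q)
    (f : ℝ → ℝ)
    (hf : ∀ x : ℝ, f x = ((p * x + ((q : ℝ) - 1)) / (p + ((q : ℝ) - 2) + x)) ^ d) :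
    ∀ x : ℝ, 1 ≤ x → 1 - f x ≤ x - 1 := by
  intro x hx
  have hq1 : (2:ℝ) ≤ (q:ℝ) := by exact_mod_cast hq
  have hd1 : (1:ℝ) ≤ (d:ℝ) := by exact_mod_cast hd
  set D : ℝ := p + ((q:ℝ) - 2) + x with hD
  have hDpos : 0 < D := by rw [hD]; nlinarith
  set r : ℝ := (p * x + ((q:ℝ) - 1)) / D with hr
  have hrnn : 0 ≤ r := by
    apply div_nonneg _ hDpos.le
    nlinarith
  have hbern : 1 + (d:ℝ) * (r - 1) ≤ (1 + (r - 1)) ^ d :=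
    one_add_mul_le_pow (by linarith) d
  have hbern' : 1 - r ^ d ≤ (d:ℝ) * (1 - r) := by
    have : (1 + (r - 1)) = r := by ring
    rw [this] at hbern
    nlinarith
  have hsub : 1 - r = (1 - p) * (x - 1) / D := by
    rw [hr, hD]
    have hD0 : p + ((q:ℝ) - 2) + x ≠ 0 := (by linarith : (0:ℝ) < p + ((q:ℝ) - 2) + x).ne'
    field_simp
    ring
  have h1 : (1 - p) * ((d:ℝ) + 1) ≤ (q:ℝ) := by
    have h2 : (q:ℝ) / ((d:ℝ) + 1) * ((d:ℝ) + 1) = (q:ℝ) :=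
      div_mul_cancel₀ _ (by positivity)
    nlinarith [hpc]
  have hkey : (d:ℝ) * ((1 - p) * (x - 1) / D) ≤ x - 1 := by
    rw [mul_div_assoc', div_le_iff₀ hDpos]
    nlinarith
  have hfx : f x = r ^ d := by rw [hf, hr, hD]
  rw [hfx]
  calc 1 - r ^ d ≤ (d:ℝ) * (1 - r) := hbern'
    _ = (d:ℝ) * ((1 - p) * (x - 1) / D) := by rw [hsub]
    _ ≤ x - 1 := hkey
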